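/- Let (y_n) be the sequence generated by the LCR algorithm. If (y_n) is bounded, then every accumulation point of (y_n) (every limit of a convergent subsequence) lies in Z = {y : V̇(y) = 0}. -/

import Mathlib

open Filter

/-- The Lyapunov derivative `V̇(y) = ⟪∇V(y), F(y)⟫`. -/
noncomputable def lyapDeriv {m : ℕ}
    (F : EuclideanSpace ℝ (Fin m) → EuclideanSpace ℝ (Fin m))
    (V : EuclideanSpace ℝ (Fin m) → ℝ) (y : EuclideanSpace ℝ (Fin m)) : ℝ :=
  inner ℝ (gradient V y) (F y)

/-- `f(y,η) = V(y + η F(y)) − V(y) − λ η V̇(y)`. -/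
noncomputable def armijoGap {m : ℕ}
    (F : EuclideanSpace ℝ (Fin m) → EuclideanSpace ℝ (Fin m))
    (V : EuclideanSpace ℝ (Fin m) → ℝ) (lam : ℝ)
    (y : EuclideanSpace ℝ (Fin m)) (η : ℝ) : ℝ :=
  V (y + η • F y) - V y - lam * η * lyapDeriv F V y

/-- The LCR algorithm: `y_{n+1} = y_n + η_n F(y_n)` with `η_n = η_init · f1^{-p_n}`, where
`p_n` is the least `k ∈ ℕ` such that `f(y_n, η_init · f1^{-k}) ≤ 0`. -/
def IsLCR {m : ℕ}
    (F : EuclideanSpace ℝ (Fin m) → EuclideanSpace ℝ (Fin m))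
    (V : EuclideanSpace ℝ (Fin m) → ℝ) (lam ηinit f1 : ℝ)
    (y : ℕ → EuclideanSpace ℝ (Fin m)) (η : ℕ → ℝ) : Prop :=
  ∀ n, y (n + 1) = y n + η n • F (y n) ∧
    ∃ p : ℕ, η n = ηinit / f1 ^ p ∧
      armijoGap F V lam (y n) (η n) ≤ 0 ∧
      ∀ k < p, ¬ armijoGap F V lam (y n) (ηinit / f1 ^ k) ≤ 0

lemma inner_gradient_eq_fderiv {m : ℕ} (V : EuclideanSpace ℝ (Fin m) → ℝ)
    (x w : EuclideanSpace ℝ (Fin m)) :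
    (inner ℝ (gradient V x) w : ℝ) = fderiv ℝ V x w := by
  rw [gradient, ← InnerProductSpace.toDual_apply_apply, LinearIsometryEquiv.apply_symm_apply]

lemma continuous_gradient_of_contDiff {m : ℕ} (V : EuclideanSpace ℝ (Fin m) → ℝ)
    (hV : ContDiff ℝ 2 V) : Continuous (gradient V) := by
  have h : Continuous (fderiv ℝ V) := hV.continuous_fderiv (by norm_num)
  exact (InnerProductSpace.toDual ℝ (EuclideanSpace ℝ (Fin m))).symm.continuous.comp h

lemma hasDerivAt_line {m : ℕ} (V : EuclideanSpace ℝ (Fin m) → ℝ) (hV : ContDiff ℝ 2 V)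
    (y w : EuclideanSpace ℝ (Fin m)) (t : ℝ) :
    HasDerivAt (fun s : ℝ => V (y + s • w)) (inner ℝ (gradient V (y + t • w)) w : ℝ) t := by
  have hd : DifferentiableAt ℝ V (y + t • w) :=
    (hV.differentiable (by norm_num)).differentiableAt
  have h2 : HasDerivAt (fun s : ℝ => y + s • w) w t := by
    simpa using ((hasDerivAt_id t).smul_const w).const_add y
  have h := hd.hasFDerivAt.comp_hasDerivAt t h2
  rw [inner_gradient_eq_fderiv]; exact h

/-- Mean value theorem along a line. -/
lemma mvt_line {m : ℕ} (V : EuclideanSpace ℝ (Fin m) → ℝ) (hV : ContDiff ℝ 2 V)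
    (y w : EuclideanSpace ℝ (Fin m)) {s : ℝ} (hs : 0 < s) :
    ∃ c ∈ Set.Ioo (0 : ℝ) s,
      (inner ℝ (gradient V (y + c • w)) w : ℝ) = (V (y + s • w) - V y) / s := by
  obtain ⟨c, hc, hceq⟩ := exists_hasDerivAt_eq_slope (fun t : ℝ => V (y + t • w))
    (fun t => (inner ℝ (gradient V (y + t • w)) w : ℝ)) hs
    ((hV.continuous.comp (by continuity)).continuousOn)
    (fun t _ => hasDerivAt_line V hV y w t)
  refine ⟨c, hc, ?_⟩
  simpa using hceq

/-- **LCR limit set (discrete LaSalle principle).** If the sequence generated by LCR is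
bounded, every accumulation point lies in `Z = {y | V̇(y) = 0}`. -/
theorem lcr_accumulation_points_in_Z
    {m : ℕ} (lam ηinit f1 : ℝ)
    (hlam : lam ∈ Set.Ioo (0 : ℝ) 1) (hηinit : 0 < ηinit) (hf1 : 1 < f1)
    (F : EuclideanSpace ℝ (Fin m) → EuclideanSpace ℝ (Fin m))
    (V : EuclideanSpace ℝ (Fin m) → ℝ)
    (hF : Continuous F) (hV : ContDiff ℝ 2 V) (hV0 : ∀ y, 0 ≤ V y)
    (hVdot : ∀ y, lyapDeriv F V y ≤ 0)
    (y : ℕ → EuclideanSpace ℝ (Fin m)) (η : ℕ → ℝ)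
    (halg : IsLCR F V lam ηinit f1 y η)
    (hbdd : Bornology.IsBounded (Set.range y))
    (ystar : EuclideanSpace ℝ (Fin m))
    (hacc : ∃ φ : ℕ → ℕ, StrictMono φ ∧ Tendsto (y ∘ φ) atTop (nhds ystar)) :
    lyapDeriv F V ystar = 0 := by
  obtain ⟨φ, hφ, hyφ⟩ := hacc
  obtain ⟨hlam0, hlam1⟩ := hlam
  have hf1pos : (0 : ℝ) < f1 := lt_trans one_pos hf1
  -- positivity of step sizes
  have hηpos : ∀ n, 0 < η n := by
    intro n
    obtain ⟨p, hp, -, -⟩ := (halg n).2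
    rw [hp]; positivity
  -- descent inequality
  have hstep : ∀ n, V (y (n + 1)) - V (y n) ≤ lam * η n * lyapDeriv F V (y n) := by
    intro n
    obtain ⟨p, -, harm, -⟩ := (halg n).2
    have := harm
    rw [armijoGap] at this
    rw [(halg n).1]
    linarith
  have hmono : Antitone (fun n => V (y n)) := by
    apply antitone_nat_of_succ_le
    intro n
    have h1 := hstep n
    have h2 : lam * η n * lyapDeriv F V (y n) ≤ 0 :=
      mul_nonpos_of_nonneg_of_nonpos (mul_nonneg hlam0.le (hηpos n).le) (hVdot (y n))
    linarith
  -- V ∘ y converges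
  have hVconv : Tendsto (fun n => V (y n)) atTop (nhds (⨅ n, V (y n))) :=
    tendsto_atTop_ciInf hmono ⟨0, fun v ⟨n, hn⟩ => hn ▸ hV0 (y n)⟩
  -- successive differences tend to 0
  have hdiff : Tendsto (fun n => V (y (n + 1)) - V (y n)) atTop (nhds 0) := by
    have := (hVconv.comp (tendsto_add_atTop_nat 1)).sub hVconv
    simpa using this
  -- η n * V̇(y n) → 0 by squeeze
  have hηV : Tendsto (fun n => η n * lyapDeriv F V (y n)) atTop (nhds 0) := by
    have hsq : Tendsto (fun n => lam * (η n * lyapDeriv F V (y n))) atTop (nhds 0) := by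
      refine tendsto_of_tendsto_of_tendsto_of_le_of_le hdiff tendsto_const_nhds
        (fun n => ?_) (fun n => ?_)
      · have := hstep n; linarith [mul_assoc lam (η n) (lyapDeriv F V (y n))]
      · have : lam * η n * lyapDeriv F V (y n) ≤ 0 :=
          mul_nonpos_of_nonneg_of_nonpos (mul_nonneg hlam0.le (hηpos n).le) (hVdot (y n))
        linarith [mul_assoc lam (η n) (lyapDeriv F V (y n))]
    have := hsq.const_mul (lam⁻¹)
    simp only [mul_zero] at this
    refine this.congr fun n => ?_
    field_simp
  -- continuity of the Lyapunov derivative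
  have hcont : Continuous (lyapDeriv F V) := by
    unfold lyapDeriv
    exact Continuous.inner (continuous_gradient_of_contDiff V hV) hF
  by_contra hne
  have hneg : lyapDeriv F V ystar < 0 := lt_of_le_of_ne (hVdot ystar) hne
  -- V̇(y (φ n)) → V̇(ystar)
  have hVd : Tendsto (fun n => lyapDeriv F V (y (φ n))) atTop (nhds (lyapDeriv F V ystar)) :=
    (hcont.tendsto ystar).comp hyφ
  -- η (φ n) → 0
  have hηVφ : Tendsto (fun n => η (φ n) * lyapDeriv F V (y (φ n))) atTop (nhds 0) :=
    hηV.comp hφ.tendsto_atTop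
  have hη0 : Tendsto (fun n => η (φ n)) atTop (nhds 0) := by
    have hdiv : Tendsto
        (fun n => (η (φ n) * lyapDeriv F V (y (φ n))) / lyapDeriv F V (y (φ n)))
        atTop (nhds 0) := by
      have := hηVφ.div hVd hne
      rw [zero_div] at this; exact this
    have hev : ∀ᶠ n in atTop, lyapDeriv F V (y (φ n)) ≠ 0 := by
      filter_upwards [hVd.eventually_lt_const (show lyapDeriv F V ystar < lyapDeriv F V ystar / 2 by linarith)] with n hn
      intro h0
      rw [h0] at hn; linarith
    refine hdiv.congr' ?_
    filter_upwards [hev] with n hn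
    field_simp
  -- eventually the Armijo test fails at step size f1 * η (φ n)
  have hfail : ∀ᶠ n in atTop, 0 < armijoGap F V lam (y (φ n)) (f1 * η (φ n)) := by
    filter_upwards [hη0.eventually_lt_const hηinit] with n hn
    obtain ⟨p, hp, -, hleast⟩ := (halg (φ n)).2
    have hppos : 0 < p := by
      rcases Nat.eq_zero_or_pos p with h0 | h0
      · exfalso; rw [h0] at hp; simp at hp; rw [hp] at hn; linarith
      · exact h0
    have hk := hleast (p - 1) (by omega)
    have heq : ηinit / f1 ^ (p - 1) = f1 * η (φ n) := by
      have hpow : f1 ^ p = f1 ^ (p - 1) * f1 := by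
        rw [← pow_succ]; congr 1; omega
      rw [hp, hpow]
      have h1 : f1 ^ (p - 1) ≠ 0 := by positivity
      field_simp
    rw [heq] at hk
    linarith
  -- apply MVT: get c n ∈ (0, f1 * η (φ n))
  have hspos : ∀ n, 0 < f1 * η (φ n) := fun n => mul_pos hf1pos (hηpos _)
  choose c hc hceq using fun n =>
    mvt_line V hV (y (φ n)) (F (y (φ n))) (hspos n)
  -- the eventual inequality: ⟪∇V(z n), F(y φ n)⟫ ≥ λ V̇(y φ n)
  have hineq : ∀ᶠ n in atTop,
      lam * lyapDeriv F V (y (φ n)) ≤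
        (inner ℝ (gradient V (y (φ n) + c n • F (y (φ n)))) (F (y (φ n))) : ℝ) := by
    filter_upwards [hfail] with n hn
    rw [hceq n]
    rw [armijoGap] at hn
    rw [le_div_iff₀ (hspos n)]
    nlinarith [hspos n]
  -- limits
  have hc0 : Tendsto c atTop (nhds 0) := by
    apply squeeze_zero (fun n => (hc n).1.le) (fun n => (hc n).2.le)
    have := hη0.const_mul f1
    simpa using this
  have hz : Tendsto (fun n => y (φ n) + c n • F (y (φ n))) atTop (nhds ystar) := by
    have hFyF : Tendsto (fun n => F (y (φ n))) atTop (nhds (F ystar)) :=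
      (hF.tendsto ystar).comp hyφ
    have h1 : Tendsto (fun n => c n • F (y (φ n))) atTop (nhds ((0 : ℝ) • F ystar)) :=
      hc0.smul hFyF
    have := hyφ.add h1
    simpa using this
  have hlhs : Tendsto
      (fun n => (inner ℝ (gradient V (y (φ n) + c n • F (y (φ n)))) (F (y (φ n))) : ℝ))
      atTop (nhds (lyapDeriv F V ystar)) := by
    have hgrad : Tendsto (fun n => gradient V (y (φ n) + c n • F (y (φ n)))) atTop
        (nhds (gradient V ystar)) :=
      ((continuous_gradient_of_contDiff V hV).tendsto ystar).comp hz
    have hFyF : Tendsto (fun n => F (y (φ n))) atTop (nhds (F ystar)) :=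
      (hF.tendsto ystar).comp hyφ
    exact hgrad.inner hFyF
  have hrhs : Tendsto (fun n => lam * lyapDeriv F V (y (φ n))) atTop
      (nhds (lam * lyapDeriv F V ystar)) := hVd.const_mul lam
  have hfinal : lam * lyapDeriv F V ystar ≤ lyapDeriv F V ystar :=
    le_of_tendsto_of_tendsto hrhs hlhs hineq
  nlinarith
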